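/- The orthocenter exists: let A°, B°, C° be linearly independent unit vectors in ℝ³ with cos a = B°⋅C°, cos b = C°⋅A°, cos c = A°⋅B°, and suppose S_A := cos a − cos b cos c, S_B := cos b − cos c cos a, S_C := cos c − cos a cos b are all nonzero. Let A' , B', C' be the duals of the sidelines (A' represented by B°×C°, etc.). Then the three lines A∨A', B∨B', C∨C' are concurrent at the point H with barycentric coordinates [1/S_A : 1/S_B : 1/S_C] with respect to A, B, C (Chasles' theorem). -/

import Mathlib

noncomputable section

/-- Euclidean dot product on `ℝ³`. -/
def dot3 (p q : Fin 3 → ℝ) : ℝ := p 0 * q 0 + p 1 * q 1 + p 2 * q 2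

/-- Cross product on `ℝ³`. -/
def cross3 (p q : Fin 3 → ℝ) : Fin 3 → ℝ :=
  ![p 1 * q 2 - p 2 * q 1, p 2 * q 0 - p 0 * q 2, p 0 * q 1 - p 1 * q 0]

/-- Euclidean norm on `ℝ³`. -/
def norm3 (p : Fin 3 → ℝ) : ℝ := Real.sqrt (dot3 p p)

/-- Determinant of three vectors in `ℝ³` (rows). -/
def det3 (u v w : Fin 3 → ℝ) : ℝ := dot3 u (cross3 v w)

/-- The `∗`-inner product of barycentric coordinate triples, given the cosines
`ca, cb, cc` of the side lengths (the Gram-matrix inner product). -/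
def star3 (ca cb cc : ℝ) (p q : Fin 3 → ℝ) : ℝ :=
  p 0 * q 0 + p 1 * q 1 + p 2 * q 2 + (p 1 * q 2 + p 2 * q 1) * ca
    + (p 2 * q 0 + p 0 * q 2) * cb + (p 0 * q 1 + p 1 * q 0) * cc

/-- Chasles' theorem / existence of the orthocenter: the lines `A∨A'`, `B∨B'`,
`C∨C'` (joining each vertex to the dual of the opposite sideline) are concurrent
at the point `H = [1/S_A : 1/S_B : 1/S_C]`. -/

lemma dot3_self_eq_one {p : Fin 3 → ℝ} (h : norm3 p = 1) : dot3 p p = 1 := by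
  have hnn : 0 ≤ dot3 p p := by unfold dot3; nlinarith [sq_nonneg (p 0), sq_nonneg (p 1), sq_nonneg (p 2)]
  have := Real.sq_sqrt hnn
  unfold norm3 at h
  nlinarith [this]

lemma triple (u v w x : Fin 3 → ℝ) :
    det3 u (cross3 v w) x = dot3 v x * dot3 u w - dot3 w x * dot3 u v := by
  simp only [det3, dot3, cross3, Matrix.cons_val_zero, Matrix.cons_val_one, Matrix.head_cons,
    Matrix.cons_val_two, Matrix.tail_cons]
  ring

lemma dot3_comb (u A B C : Fin 3 → ℝ) (a b c : ℝ) :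
    dot3 u (a • A + b • B + c • C) = a * dot3 u A + b * dot3 u B + c * dot3 u C := by
  simp only [dot3, Pi.add_apply, Pi.smul_apply, smul_eq_mul]
  ring

lemma dot3_comm (u v : Fin 3 → ℝ) : dot3 u v = dot3 v u := by unfold dot3; ring

theorem orthocenter_exists (A B C : Fin 3 → ℝ)
    (hA : norm3 A = 1) (hB : norm3 B = 1) (hC : norm3 C = 1)
    (hS : det3 A B C ≠ 0)
    (SA SB SC : ℝ)
    (hSA : SA = dot3 B C - dot3 C A * dot3 A B)
    (hSB : SB = dot3 C A - dot3 A B * dot3 B C)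
    (hSC : SC = dot3 A B - dot3 B C * dot3 C A)
    (hSA0 : SA ≠ 0) (hSB0 : SB ≠ 0) (hSC0 : SC ≠ 0)
    (H : Fin 3 → ℝ) (hH : H = SA⁻¹ • A + SB⁻¹ • B + SC⁻¹ • C) :
    det3 A (cross3 B C) H = 0 ∧ det3 B (cross3 C A) H = 0 ∧
    det3 C (cross3 A B) H = 0 := by
  subst hH hSA hSB hSC
  have hAA := dot3_self_eq_one hA
  have hBB := dot3_self_eq_one hB
  have hCC := dot3_self_eq_one hC
  refine ⟨?_, ?_, ?_⟩ <;>
  · rw [triple, dot3_comb, dot3_comb]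
    rw [dot3_comm B A, dot3_comm C A, dot3_comm C B] at *
    simp only [hAA, hBB, hCC] <;> field_simp [show dot3 A C - dot3 B C * dot3 A B ≠ 0 by rwa [mul_comm]] <;> ring
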